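/- Let (Y_n) be a monotone sequence of integer-valued random variables (Y_n ≤ Y_{n+1} a.s. for all n), let (a_n) be a real sequence with a_n → ∞ and a_{n+1} - a_n → 0, and let F : ℝ → [0,1] be right-continuous with F(x) → 0 as x → -∞ and F(x) → 1 as x → ∞. Suppose that for every sequence (k_n) of integers, P(Y_n ≤ k_n) = F(k_n - a_n) + o(1) as n → ∞. Then F is monotone nondecreasing, hence a distribution function. -/
import Mathlib


open MeasureTheory Filter

private lemma crossing_aux (a : ℕ → ℝ) (ha : Tendsto a atTop atTop) (δ : ℝ) (N : ℕ)
    (hδ : ∀ n, N ≤ n → a (n + 1) - a n < δ) (c : ℝ) (hN : a N ≤ c) :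
    ∃ n, N ≤ n ∧ c - δ < a n ∧ a n ≤ c := by
  classical
  have hex : ∃ n, N ≤ n ∧ c < a n := by
    obtain ⟨n, hn⟩ := ((ha.eventually_gt_atTop c).and (eventually_ge_atTop N)).exists
    exact ⟨n, hn.2, hn.1⟩
  set n₀ := Nat.find hex with hn₀
  obtain ⟨hn₀N, hn₀c⟩ := Nat.find_spec hex
  have hne : n₀ ≠ N := by
    intro h
    have : c < a N := h ▸ hn₀c
    linarith
  have hpos : 0 < n₀ := Nat.pos_of_ne_zero (by omega)
  refine ⟨n₀ - 1, by omega, ?_, ?_⟩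
  · have h1 : a ((n₀ - 1) + 1) - a (n₀ - 1) < δ := hδ _ (by omega)
    have h2 : (n₀ - 1) + 1 = n₀ := by omega
    rw [h2] at h1
    linarith
  · have := Nat.find_min hex (m := n₀ - 1) (by omega)
    push_neg at this
    exact this (by omega)

theorem limit_function_is_monotone {Ω : Type*} [MeasurableSpace Ω]
    (P : Measure Ω) [IsProbabilityMeasure P] (Y : ℕ → Ω → ℤ)
    (hmeas : ∀ n, Measurable (Y n))
    (hmono : ∀ n, ∀ᵐ ω ∂P, Y n ω ≤ Y (n+1) ω)
    (a : ℕ → ℝ) (ha : Tendsto a atTop atTop)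
    (hstep : Tendsto (fun n => a (n+1) - a n) atTop (nhds 0))
    (F : ℝ → ℝ) (hF01 : ∀ x, F x ∈ Set.Icc (0:ℝ) 1)
    (hFrc : ∀ x, ContinuousWithinAt F (Set.Ici x) x)
    (hFbot : Tendsto F atBot (nhds 0)) (hFtop : Tendsto F atTop (nhds 1))
    (hconv : ∀ k : ℕ → ℤ,
      Tendsto (fun n => (P {ω | Y n ω ≤ k n}).toReal - F ((k n : ℝ) - a n))
        atTop (nhds 0)) :
    Monotone F := by
  classical
  -- a.s. monotonicity across all indices
  have hmono_all : ∀ m n, m ≤ n → ∀ᵐ ω ∂P, Y m ω ≤ Y n ω := by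
    intro m n hmn
    induction n, hmn using Nat.le_induction with
    | base => exact Eventually.of_forall (fun ω => le_rfl)
    | succ n hmn ih =>
        filter_upwards [ih, hmono n] with ω h1 h2 using h1.trans h2
  -- measure comparison
  have hP_mono : ∀ m n : ℕ, ∀ k l : ℤ, m ≤ n → k ≤ l →
      (P {ω | Y n ω ≤ k}).toReal ≤ (P {ω | Y m ω ≤ l}).toReal := by
    intro m n k l hmn hkl
    have hmeasle : P {ω | Y n ω ≤ k} ≤ P {ω | Y m ω ≤ l} := by
      apply measure_mono_ae
      filter_upwards [hmono_all m n hmn] with ω hY hω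
      exact le_trans hY (le_trans hω hkl)
    exact ENNReal.toReal_mono (measure_ne_top P _) hmeasle
  -- uniform-in-k version of hconv
  have huniform : ∀ ε : ℝ, 0 < ε → ∃ N : ℕ, ∀ n, N ≤ n → ∀ k : ℤ,
      |(P {ω | Y n ω ≤ k}).toReal - F ((k : ℝ) - a n)| < ε := by
    intro ε hε
    by_contra hcon
    push_neg at hcon
    set f : ℕ → ℤ → ℝ := fun n k => (P {ω | Y n ω ≤ k}).toReal - F ((k : ℝ) - a n) with hf
    have hchoice : ∀ N : ℕ, ∃ n, N ≤ n ∧ ∃ k : ℤ, ε ≤ |f n k| := by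
      intro N
      obtain ⟨n, hn, k, hk⟩ := hcon N
      exact ⟨n, hn, k, hk⟩
    set k : ℕ → ℤ := fun n => if h : ∃ k : ℤ, ε ≤ |f n k| then h.choose else 0 with hk
    have hfreq : ∃ᶠ n in atTop, ε ≤ |f n (k n)| := by
      rw [frequently_atTop]
      intro N
      obtain ⟨n, hn, kk, hkk⟩ := hchoice N
      refine ⟨n, hn, ?_⟩
      have hex : ∃ k : ℤ, ε ≤ |f n k| := ⟨kk, hkk⟩
      simp only [hk, dif_pos hex]
      exact hex.choose_spec
    have := hconv k
    have hev : ∀ᶠ n in atTop, |f n (k n)| < ε := by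
      have := (Metric.tendsto_nhds.mp this) ε hε
      simpa [Real.dist_eq, hf] using this
    obtain ⟨n, hn1, hn2⟩ := (hfreq.and_eventually hev).exists
    linarith
  -- main monotonicity argument
  intro x y hxy
  refine le_of_forall_pos_le_add ?_
  intro ε hε
  have hε4 : 0 < ε / 4 := by linarith
  -- right continuity at x and y
  have hrc : ∀ z : ℝ, ∃ δ > 0, ∀ t, z ≤ t → t < z + δ → |F t - F z| < ε / 4 := by
    intro z
    have := Metric.continuousWithinAt_iff.mp (hFrc z) (ε / 4) hε4
    obtain ⟨δ, hδ, hδ'⟩ := this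
    refine ⟨δ, hδ, fun t ht1 ht2 => ?_⟩
    have : dist (F t) (F z) < ε / 4 := hδ' ht1 (by rw [Real.dist_eq]; rw [abs_lt]; constructor <;> linarith)
    rwa [Real.dist_eq] at this
  obtain ⟨δx, hδx, hδx'⟩ := hrc x
  obtain ⟨δy, hδy, hδy'⟩ := hrc y
  set δ := min δx δy with hδdef
  have hδpos : 0 < δ := lt_min hδx hδy
  -- get N from uniform estimate and step bound
  obtain ⟨N₁, hN₁⟩ := huniform (ε / 4) hε4
  have hstep' : ∀ᶠ n in atTop, a (n + 1) - a n < δ := by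
    have := (Metric.tendsto_nhds.mp hstep) δ hδpos
    filter_upwards [this] with n hn
    rw [Real.dist_eq, sub_zero] at hn
    exact lt_of_abs_lt hn
  obtain ⟨N₂, hN₂⟩ := eventually_atTop.mp hstep'
  set N := max N₁ N₂ with hN
  -- choose big integer M
  set M : ℤ := ⌈a N + y⌉ + 1 with hM
  have hMa : a N ≤ (M : ℝ) - y := by
    have : a N + y ≤ (⌈a N + y⌉ : ℝ) := Int.le_ceil _
    push_cast [hM]
    linarith
  -- first crossing: level M - y, from index N
  obtain ⟨m, hmN, hm1, hm2⟩ := crossing_aux a ha δ N (fun n hn => hN₂ n (le_trans (le_max_right _ _) hn)) ((M : ℝ) - y) hMa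
  -- second integer M'
  set M' : ℤ := M - ⌊y - x⌋ with hM'
  have hM'le : M' ≤ M := by
    have : (0 : ℤ) ≤ ⌊y - x⌋ := Int.le_floor.mpr (by push_cast; linarith)
    omega
  have hM'x : a m ≤ (M' : ℝ) - x := by
    have hfl : (⌊y - x⌋ : ℝ) ≤ y - x := Int.floor_le _
    have : (M' : ℝ) - x ≥ (M : ℝ) - y := by push_cast [hM']; linarith
    linarith
  -- second crossing: level M' - x, from index m
  obtain ⟨n, hnm, hn1, hn2⟩ := crossing_aux a ha δ m (fun j hj => hN₂ j (le_trans (le_max_right _ _) (le_trans hmN hj))) ((M' : ℝ) - x) hM'x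
  -- collect the estimates
  have hnN₁ : N₁ ≤ n := le_trans (le_max_left _ _) (le_trans hmN hnm)
  have hmN₁ : N₁ ≤ m := le_trans (le_max_left _ _) hmN
  have hFx : |F ((M' : ℝ) - a n) - F x| < ε / 4 := by
    apply hδx' <;> [linarith; skip]
    have : δ ≤ δx := min_le_left _ _
    linarith
  have hFy : |F ((M : ℝ) - a m) - F y| < ε / 4 := by
    apply hδy' <;> [linarith; skip]
    have : δ ≤ δy := min_le_right _ _
    linarith
  have hPn : |(P {ω | Y n ω ≤ M'}).toReal - F ((M' : ℝ) - a n)| < ε / 4 := hN₁ n hnN₁ M'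
  have hPm : |(P {ω | Y m ω ≤ M}).toReal - F ((M : ℝ) - a m)| < ε / 4 := hN₁ m hmN₁ M
  have hPP : (P {ω | Y n ω ≤ M'}).toReal ≤ (P {ω | Y m ω ≤ M}).toReal :=
    hP_mono m n M' M hnm hM'le
  rw [abs_lt] at hFx hFy hPn hPm
  linarith [hFx.1, hFx.2, hFy.1, hFy.2, hPn.1, hPn.2, hPm.1, hPm.2, hPP]
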